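/- Let A be an m×N real matrix with orthonormal rows and B an N×m real matrix with orthonormal columns. For a signed permutation s = (π,ε) of ℝ^N let sB denote the matrix obtained by applying s to each column of B. Then the average over all 2^N · N! signed permutations s of det²(A · (sB)) equals 1/(N choose m). -/

import Mathlib

open scoped BigOperators Matrix

noncomputable section

/-- The result of applying the signed permutation `(π, ε)` to every column of an `N × m`
matrix `B`: the column `b` is replaced by `(π,ε)b`, where `((π,ε)b)_i = ε_i b_{π(i)}`. -/
def signedPermCols {N m : ℕ} (π : Equiv.Perm (Fin N)) (ε : Fin N → ℤˣ)
    (B : Matrix (Fin N) (Fin m) ℝ) : Matrix (Fin N) (Fin m) ℝ :=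
  Matrix.of fun i j => ((ε i : ℤ) : ℝ) * B (π i) j

namespace AvgDetAux

open Matrix Equiv Finset Function

variable {N m : ℕ}

/-- determinant of the column-selected submatrix -/
def dcol (M : Matrix (Fin m) (Fin N) ℝ) (p : Fin m → Fin N) : ℝ :=
  (M.submatrix id p).det

lemma dcol_zero (M : Matrix (Fin m) (Fin N) ℝ) {p : Fin m → Fin N}
    (hp : ¬ Function.Injective p) : dcol M p = 0 := by
  rw [Function.Injective] at hp
  push_neg at hp
  obtain ⟨i, j, hij, hne⟩ := hp
  rw [dcol, ← Matrix.det_transpose, Matrix.transpose_submatrix]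
  exact Matrix.det_zero_of_row_eq hne (by funext k; simp [Matrix.submatrix_apply, hij])

lemma dcol_comp (M : Matrix (Fin m) (Fin N) ℝ) (p : Fin m → Fin N) (τ : Equiv.Perm (Fin m)) :
    dcol M (p ∘ τ) = ((Equiv.Perm.sign τ : ℤ) : ℝ) * dcol M p := by
  rw [dcol, dcol]
  have : M.submatrix id (p ∘ τ) = (M.submatrix id p).submatrix id τ := by
    rw [Matrix.submatrix_submatrix]; rfl
  rw [this, Matrix.det_permute']

/-- "asymmetric" Cauchy–Binet expansion -/
lemma cb (M : Matrix (Fin m) (Fin N) ℝ) (C : Matrix (Fin N) (Fin m) ℝ) :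
    (M * C).det = ∑ p : Fin m → Fin N, dcol M p * ∏ i, C (p i) i := by
  rw [Matrix.det_apply']
  simp only [Matrix.mul_apply]
  have h1 : ∀ σ : Equiv.Perm (Fin m),
      (∏ i, ∑ k, M (σ i) k * C k i)
        = ∑ p : Fin m → Fin N, ∏ i, M (σ i) (p i) * C (p i) i := by
    intro σ
    rw [Finset.prod_univ_sum]
    exact Fintype.sum_congr _ _ (fun p => rfl)
  simp_rw [h1, Finset.mul_sum]
  rw [Finset.sum_comm]
  refine Finset.sum_congr rfl (fun p _ => ?_)
  rw [dcol, Matrix.det_apply', Finset.sum_mul]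
  refine Finset.sum_congr rfl (fun σ _ => ?_)
  rw [Finset.prod_mul_distrib]
  simp [Matrix.submatrix_apply]
  ring

/-- symmetric Cauchy–Binet -/
lemma cb2 (M : Matrix (Fin m) (Fin N) ℝ) (C : Matrix (Fin N) (Fin m) ℝ) :
    ∑ p : Fin m → Fin N, dcol M p * (C.submatrix p id).det
      = (m.factorial : ℝ) * (M * C).det := by
  have h1 : ∀ p : Fin m → Fin N, (C.submatrix p id).det
      = ∑ τ : Equiv.Perm (Fin m), ((Equiv.Perm.sign τ : ℤ) : ℝ) * ∏ i, C (p (τ i)) i := by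
    intro p
    rw [Matrix.det_apply']
    rfl
  simp_rw [h1, Finset.mul_sum]
  rw [Finset.sum_comm]
  have key : ∀ τ : Equiv.Perm (Fin m),
      (∑ p : Fin m → Fin N, dcol M p * (((Equiv.Perm.sign τ : ℤ) : ℝ) * ∏ i, C (p (τ i)) i))
        = (M * C).det := by
    intro τ
    rw [cb M C]
    refine Fintype.sum_equiv (Equiv.arrowCongr τ.symm (Equiv.refl (Fin N))) _ _ (fun p => ?_)
    have he : (Equiv.arrowCongr τ.symm (Equiv.refl (Fin N))) p = p ∘ τ := rfl
    rw [he, dcol_comp]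
    have hsq : ((Equiv.Perm.sign τ : ℤ) : ℝ) * ((Equiv.Perm.sign τ : ℤ) : ℝ) = 1 := by
      rcases Int.units_eq_one_or (Equiv.Perm.sign τ) with h | h <;> rw [h] <;> norm_num
    have : ∏ i, C ((p ∘ τ) i) i = ∏ i, C (p (τ i)) i := rfl
    rw [this]
    nlinarith [hsq]
  rw [Finset.sum_congr rfl (fun τ _ => key τ)]
  simp [Finset.sum_const, Fintype.card_perm]

lemma sum_units_cast : ∑ u : ℤˣ, ((u : ℤ) : ℝ) = 0 := by
  rw [UnitsInt.univ]
  norm_num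

lemma usq (u : ℤˣ) : ((u : ℤ) : ℝ) * ((u : ℤ) : ℝ) = 1 := by
  rcases Int.units_eq_one_or u with h | h <;> rw [h] <;> norm_num

lemma sum_eps (U : Finset (Fin N)) :
    ∑ ε : Fin N → ℤˣ, ∏ k ∈ U, ((ε k : ℤ) : ℝ)
      = if U = ∅ then (2 : ℝ) ^ N else 0 := by
  have h1 : ∀ ε : Fin N → ℤˣ, ∏ k ∈ U, ((ε k : ℤ) : ℝ)
      = ∏ k : Fin N, (if k ∈ U then ((ε k : ℤ) : ℝ) else 1) := by
    intro ε
    rw [Finset.prod_ite_mem, Finset.univ_inter]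
  simp_rw [h1]
  have h2 : ∑ ε : Fin N → ℤˣ, ∏ k : Fin N, (if k ∈ U then ((ε k : ℤ) : ℝ) else 1)
      = ∏ k : Fin N, ∑ u : ℤˣ, (if k ∈ U then ((u : ℤ) : ℝ) else 1) := by
    rw [Finset.prod_univ_sum]
    rw [Fintype.piFinset_univ]
  rw [h2]
  have h3 : ∀ k : Fin N, (∑ u : ℤˣ, (if k ∈ U then ((u : ℤ) : ℝ) else 1))
      = if k ∈ U then 0 else 2 := by
    intro k
    by_cases hk : k ∈ U
    · simp only [hk, if_true]; exact sum_units_cast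
    · simp [hk]
  simp_rw [h3]
  by_cases hU : U = ∅
  · simp [hU]
  · rw [if_neg hU]
    obtain ⟨k, hk⟩ := Finset.nonempty_iff_ne_empty.2 hU
    exact Finset.prod_eq_zero (Finset.mem_univ k) (by simp [hk])

lemma eps_pair {p q : Fin m → Fin N} (hp : Function.Injective p)
    (hq : Function.Injective q) :
    ∑ ε : Fin N → ℤˣ, (∏ i, ((ε (p i) : ℤ) : ℝ)) * ∏ i, ((ε (q i) : ℤ) : ℝ)
      = if Finset.univ.image p = Finset.univ.image q then (2 : ℝ) ^ N else 0 := by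
  set S := Finset.univ.image p with hS
  set T := Finset.univ.image q with hT
  have hps : ∀ ε : Fin N → ℤˣ, ∏ i, ((ε (p i) : ℤ) : ℝ) = ∏ k ∈ S, ((ε k : ℤ) : ℝ) := by
    intro ε
    rw [hS, Finset.prod_image (fun x _ y _ h => hp h)]
  have hqs : ∀ ε : Fin N → ℤˣ, ∏ i, ((ε (q i) : ℤ) : ℝ) = ∏ k ∈ T, ((ε k : ℤ) : ℝ) := by
    intro ε
    rw [hT, Finset.prod_image (fun x _ y _ h => hq h)]
  have key : ∀ ε : Fin N → ℤˣ,
      (∏ k ∈ S, ((ε k : ℤ) : ℝ)) * ∏ k ∈ T, ((ε k : ℤ) : ℝ)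
        = ∏ k ∈ (S \ T ∪ T \ S), ((ε k : ℤ) : ℝ) := by
    intro ε
    have hS' : (∏ k ∈ S, ((ε k : ℤ) : ℝ))
        = (∏ k ∈ S \ T, ((ε k : ℤ) : ℝ)) * ∏ k ∈ S ∩ T, ((ε k : ℤ) : ℝ) := by
      rw [← Finset.prod_union (Finset.disjoint_sdiff_inter S T), Finset.sdiff_union_inter]
    have hT' : (∏ k ∈ T, ((ε k : ℤ) : ℝ))
        = (∏ k ∈ T \ S, ((ε k : ℤ) : ℝ)) * ∏ k ∈ S ∩ T, ((ε k : ℤ) : ℝ) := by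
      rw [Finset.inter_comm S T]
      rw [← Finset.prod_union (Finset.disjoint_sdiff_inter T S), Finset.sdiff_union_inter]
    rw [hS', hT', Finset.prod_union disjoint_sdiff_sdiff]
    have : (∏ k ∈ S ∩ T, ((ε k : ℤ) : ℝ)) * ∏ k ∈ S ∩ T, ((ε k : ℤ) : ℝ) = 1 := by
      rw [← Finset.prod_mul_distrib]
      exact Finset.prod_eq_one (fun k _ => usq (ε k))
    calc (∏ k ∈ S \ T, ((ε k : ℤ) : ℝ)) * (∏ k ∈ S ∩ T, ((ε k : ℤ) : ℝ)) *
          ((∏ k ∈ T \ S, ((ε k : ℤ) : ℝ)) * ∏ k ∈ S ∩ T, ((ε k : ℤ) : ℝ))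
        = (∏ k ∈ S \ T, ((ε k : ℤ) : ℝ)) * (∏ k ∈ T \ S, ((ε k : ℤ) : ℝ)) *
          ((∏ k ∈ S ∩ T, ((ε k : ℤ) : ℝ)) * ∏ k ∈ S ∩ T, ((ε k : ℤ) : ℝ)) := by ring
      _ = (∏ k ∈ S \ T, ((ε k : ℤ) : ℝ)) * (∏ k ∈ T \ S, ((ε k : ℤ) : ℝ)) := by rw [this, mul_one]
  simp_rw [hps, hqs, key]
  rw [sum_eps]
  congr 1
  rw [Finset.union_eq_empty]
  simp only [Finset.sdiff_eq_empty_iff_subset]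
  apply propext
  constructor
  · rintro ⟨h1, h2⟩; exact Finset.Subset.antisymm h1 h2
  · intro h; rw [h]; exact ⟨Finset.Subset.refl _, Finset.Subset.refl _⟩

lemma image_comp_perm (p : Fin m → Fin N) (τ : Equiv.Perm (Fin m)) :
    Finset.univ.image (p ∘ τ) = Finset.univ.image p := by
  rw [← Finset.image_image, Finset.image_univ_equiv]

lemma sum_q_eq (F : (Fin m → Fin N) → ℝ) (hF : ∀ q, ¬ Function.Injective q → F q = 0)
    {p : Fin m → Fin N} (hp : Function.Injective p) :
    ∑ q : Fin m → Fin N, (if Finset.univ.image q = Finset.univ.image p then F q else 0)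
      = ∑ τ : Equiv.Perm (Fin m), F (p ∘ τ) := by
  classical
  rw [← Finset.sum_filter]
  set t := Finset.univ.filter
    (fun q : Fin m → Fin N => Finset.univ.image q = Finset.univ.image p ∧ Function.Injective q)
    with ht
  have hsub : t ⊆ Finset.univ.filter
      (fun q : Fin m → Fin N => Finset.univ.image q = Finset.univ.image p) := by
    intro q hq
    simp only [ht, Finset.mem_filter] at hq ⊢
    exact ⟨hq.1, hq.2.1⟩
  rw [← Finset.sum_subset hsub (by
    intro q hq1 hq2
    simp only [ht, Finset.mem_filter, Finset.mem_univ, true_and] at hq1 hq2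
    push_neg at hq2
    exact hF q (hq2 hq1))]
  have hmem : ∀ q, q ∈ t → ∀ i : Fin m, ∃ j, p j = q i := by
    intro q hq i
    simp only [ht, Finset.mem_filter] at hq
    have : q i ∈ Finset.univ.image p := by
      rw [← hq.2.1]; exact Finset.mem_image_of_mem q (Finset.mem_univ i)
    obtain ⟨j, _, hj⟩ := Finset.mem_image.1 this
    exact ⟨j, hj⟩
  symm
  refine Finset.sum_bij'
    (i := fun (τ : Equiv.Perm (Fin m)) (_ : τ ∈ Finset.univ) => p ∘ τ)
    (j := fun (q : Fin m → Fin N) (hq : q ∈ t) =>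
      Equiv.ofBijective (fun i => (hmem q hq i).choose)
        (by
          have hinj : Function.Injective (fun i => (hmem q hq i).choose) := by
            intro a b hab
            have ha := (hmem q hq a).choose_spec
            have hb := (hmem q hq b).choose_spec
            simp only at hab
            have : q a = q b := by rw [← ha, ← hb, hab]
            simp only [ht, Finset.mem_filter] at hq
            exact hq.2.2 this
          exact (Finite.injective_iff_bijective).1 hinj))
    ?_ ?_ ?_ ?_ ?_
  · intro τ _
    simp only [ht, Finset.mem_filter, Finset.mem_univ, true_and]
    exact ⟨image_comp_perm p τ, hp.comp τ.injective⟩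
  · intro q hq
    exact Finset.mem_univ _
  · intro τ _
    apply Equiv.ext
    intro i
    simp only [Equiv.ofBijective_apply, Function.comp_apply]
    apply hp
    have hpt : p ∘ ⇑τ ∈ t := by
      simp only [ht, Finset.mem_filter, Finset.mem_univ, true_and]
      exact ⟨image_comp_perm p τ, hp.comp τ.injective⟩
    exact Exists.choose_spec (hmem (p ∘ ⇑τ) hpt i)
  · intro q hq
    funext i
    simp only [Function.comp_apply, Equiv.ofBijective_apply]
    exact (hmem q hq i).choose_spec
  · intro τ _
    rfl

lemma exists_extend {p r : Fin m → Fin N} (hp : Function.Injective p)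
    (hr : Function.Injective r) : ∃ π : Equiv.Perm (Fin N), ∀ i, π (p i) = r i := by
  classical
  have h1 : Fintype.card {x : Fin N // x ∈ Set.range p} = m := by
    rw [Fintype.card_congr (Equiv.ofInjective p hp).symm, Fintype.card_fin]
  have h2 : Fintype.card {x : Fin N // x ∈ Set.range r} = m := by
    rw [Fintype.card_congr (Equiv.ofInjective r hr).symm, Fintype.card_fin]
  have hcard : Fintype.card {x : Fin N // ¬ x ∈ Set.range p}
      = Fintype.card {x : Fin N // ¬ x ∈ Set.range r} := by
    rw [Fintype.card_subtype_compl, Fintype.card_subtype_compl, h1, h2]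
  let e : {x : Fin N // x ∈ Set.range p} ≃ {x : Fin N // x ∈ Set.range r} :=
    (Equiv.ofInjective p hp).symm.trans (Equiv.ofInjective r hr)
  let c : {x : Fin N // ¬ x ∈ Set.range p} ≃ {x : Fin N // ¬ x ∈ Set.range r} :=
    Fintype.equivOfCardEq hcard
  refine ⟨(Equiv.sumCompl (· ∈ Set.range p)).symm.trans
    ((e.sumCongr c).trans (Equiv.sumCompl (· ∈ Set.range r))), fun i => ?_⟩
  simp only [Equiv.trans_apply]
  rw [Equiv.sumCompl_symm_apply_of_pos (a := p i) ⟨i, rfl⟩]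
  simp only [Equiv.sumCongr_apply, Sum.map_inl, Equiv.sumCompl_apply_inl]
  show ((e ⟨p i, ⟨i, rfl⟩⟩ : {x : Fin N // x ∈ Set.range r}) : Fin N) = r i
  simp only [e, Equiv.trans_apply]
  rw [show (⟨p i, ⟨i, rfl⟩⟩ : {x : Fin N // x ∈ Set.range p}) = Equiv.ofInjective p hp i from rfl]
  rw [Equiv.symm_apply_apply]
  rfl

lemma card_fix {p : Fin m → Fin N} (hp : Function.Injective p) :
    (Finset.univ.filter (fun π : Equiv.Perm (Fin N) => ⇑π ∘ p = p)).card
      = (N - m).factorial := by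
  classical
  rw [← Fintype.card_subtype]
  have E : {π : Equiv.Perm (Fin N) // ⇑π ∘ p = p}
      ≃ Equiv.Perm {a : Fin N // ¬ a ∈ Set.range p} := by
    refine (Equiv.subtypeEquivRight ?_).trans
      (Equiv.Perm.subtypeEquivSubtypePerm (fun a => ¬ a ∈ Set.range p)).symm
    intro π
    constructor
    · rintro h a ha
      obtain ⟨i, rfl⟩ := not_not.1 ha
      exact congrFun h i
    · intro h
      funext i
      exact h (p i) (not_not.2 ⟨i, rfl⟩)
  rw [Fintype.card_congr E, Fintype.card_perm]
  congr 1
  rw [Fintype.card_subtype_compl,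
    Fintype.card_congr (Equiv.ofInjective p hp).symm, Fintype.card_fin, Fintype.card_fin]

lemma card_fiber {p : Fin m → Fin N} (hp : Function.Injective p)
    {r : Fin m → Fin N} (π₀ : Equiv.Perm (Fin N)) (hπ₀ : ⇑π₀ ∘ p = r) :
    (Finset.univ.filter (fun π : Equiv.Perm (Fin N) => ⇑π ∘ p = r)).card
      = (N - m).factorial := by
  classical
  rw [← card_fix hp]
  apply Finset.card_bij (fun π _ => π₀⁻¹ * π)
  · intro π hπ
    simp only [Finset.mem_filter, Finset.mem_univ, true_and] at hπ ⊢
    funext i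
    have h1 : π (p i) = r i := congrFun hπ i
    have h2 : π₀ (p i) = r i := congrFun hπ₀ i
    simp only [Equiv.Perm.mul_apply, Function.comp_apply]
    rw [h1, ← h2, Equiv.Perm.inv_def, Equiv.symm_apply_apply]
  · intro a _ b _ hab
    exact mul_left_cancel hab
  · intro σ hσ
    simp only [Finset.mem_filter, Finset.mem_univ, true_and] at hσ
    refine ⟨π₀ * σ, ?_, by group⟩
    simp only [Finset.mem_filter, Finset.mem_univ, true_and]
    funext i
    have h1 : σ (p i) = p i := congrFun hσ i
    have h2 : π₀ (p i) = r i := congrFun hπ₀ i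
    simp only [Equiv.Perm.mul_apply, Function.comp_apply, h1, h2]

lemma sum_pi_comp (H : (Fin m → Fin N) → ℝ) (hH : ∀ r, ¬ Function.Injective r → H r = 0)
    {p : Fin m → Fin N} (hp : Function.Injective p) :
    ∑ π : Equiv.Perm (Fin N), H (⇑π ∘ p)
      = ((N - m).factorial : ℝ) * ∑ r : Fin m → Fin N, H r := by
  classical
  rw [Finset.sum_comp H (fun π : Equiv.Perm (Fin N) => ⇑π ∘ p)]
  have h1 : ∀ r ∈ Finset.univ.image (fun π : Equiv.Perm (Fin N) => ⇑π ∘ p),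
      (Finset.univ.filter (fun π : Equiv.Perm (Fin N) => ⇑π ∘ p = r)).card • H r
        = ((N - m).factorial : ℝ) * H r := by
    intro r hr
    obtain ⟨π₀, _, hπ₀⟩ := Finset.mem_image.1 hr
    rw [card_fiber hp π₀ hπ₀, nsmul_eq_mul]
  rw [Finset.sum_congr rfl h1, ← Finset.mul_sum]
  congr 1
  apply Finset.sum_subset (Finset.subset_univ _)
  intro r _ hr
  apply hH
  intro hrinj
  apply hr
  obtain ⟨π, hπ⟩ := exists_extend hp hrinj
  exact Finset.mem_image.2 ⟨π, Finset.mem_univ π, funext hπ⟩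

end AvgDetAux

/-- Let `A` be an `m × N` real matrix with orthonormal rows and `B` an `N × m` real matrix
with orthonormal columns. Then the average over all `2^N · N!` signed permutations `s` of
`det²(A ⬝ (sB))` equals `1/(N choose m)`. -/
theorem average_det_sq_signed_perm_eq (N m : ℕ)
    (A : Matrix (Fin m) (Fin N) ℝ) (hA : A * Aᵀ = 1)
    (B : Matrix (Fin N) (Fin m) ℝ) (hB : Bᵀ * B = 1) :
    (∑ π : Equiv.Perm (Fin N), ∑ ε : Fin N → ℤˣ,
        (A * signedPermCols π ε B).det ^ 2) / (2 ^ N * N.factorial) =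
      1 / (N.choose m : ℝ) := by
  classical
  open AvgDetAux Finset in
  -- abbreviations
  set d : (Fin m → Fin N) → ℝ := dcol A with hd
  -- `H r` : the Cauchy–Binet weight attached to `B` and the row-selection `r`
  set H : (Fin m → Fin N) → ℝ :=
    fun r => (∏ i, B (r i) i) * (B.submatrix r id).det with hH
  have hHzero : ∀ r, ¬ Function.Injective r → H r = 0 := by
    intro r hr
    rw [Function.Injective] at hr
    push_neg at hr
    obtain ⟨i, j, hij, hne⟩ := hr
    have : (B.submatrix r id).det = 0 :=
      Matrix.det_zero_of_row_eq hne (by funext k; simp [Matrix.submatrix_apply, hij])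
    simp [hH, this]
  -- `∑ p, d p ^ 2 = m!`
  have sumA : ∑ p : Fin m → Fin N, d p ^ 2 = (m.factorial : ℝ) := by
    have h := cb2 A Aᵀ
    rw [hA, Matrix.det_one, mul_one] at h
    rw [← h]
    refine Finset.sum_congr rfl (fun p _ => ?_)
    rw [pow_two, hd, dcol]
    congr 1
    rw [show Aᵀ.submatrix p id = (A.submatrix id p)ᵀ by rw [Matrix.transpose_submatrix]]
    rw [Matrix.det_transpose]
  -- `m ≤ N`
  have hmN : m ≤ N := by
    by_contra hlt
    push_neg at hlt
    have hall : ∀ p : Fin m → Fin N, d p = 0 := by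
      intro p
      apply dcol_zero
      intro hinj
      have := Fintype.card_le_of_injective p hinj
      simp only [Fintype.card_fin] at this
      omega
    have hz : (∑ p : Fin m → Fin N, d p ^ 2) = 0 :=
      Finset.sum_eq_zero (fun p _ => by rw [hall p]; norm_num)
    rw [hz] at sumA
    exact (Nat.cast_ne_zero.2 (Nat.factorial_ne_zero m)) sumA.symm
  -- `∑ r, H r = 1`
  have sumB1 : ∑ r : Fin m → Fin N, H r = 1 := by
    have h := cb Bᵀ B
    rw [hB, Matrix.det_one] at h
    have h2 : ∀ r : Fin m → Fin N, H r = dcol Bᵀ r * ∏ i, B (r i) i := by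
      intro r
      simp only [hH]
      rw [dcol]
      rw [show Bᵀ.submatrix id r = (B.submatrix r id)ᵀ by rw [Matrix.transpose_submatrix]]
      rw [Matrix.det_transpose]
      ring
    rw [Finset.sum_congr rfl (fun r _ => h2 r), ← h]
  -- expansion of the determinant
  have detexp : ∀ (π : Equiv.Perm (Fin N)) (ε : Fin N → ℤˣ),
      (A * signedPermCols π ε B).det
        = ∑ p : Fin m → Fin N,
            d p * ((∏ i, ((ε (p i) : ℤ) : ℝ)) * ∏ i, B (π (p i)) i) := by
    intro π ε
    rw [cb A (signedPermCols π ε B)]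
    refine Finset.sum_congr rfl (fun p _ => ?_)
    rw [show ∏ i, signedPermCols π ε B (p i) i
        = ∏ i, (((ε (p i) : ℤ) : ℝ) * B (π (p i)) i) from rfl]
    rw [Finset.prod_mul_distrib]
  -- main per-π computation
  have key1 : ∀ π : Equiv.Perm (Fin N),
      (∑ ε : Fin N → ℤˣ, (A * signedPermCols π ε B).det ^ 2)
        = (2 : ℝ) ^ N * ∑ p : Fin m → Fin N, d p ^ 2 * H (⇑π ∘ p) := by
    intro π
    have step1 : (∑ ε : Fin N → ℤˣ, (A * signedPermCols π ε B).det ^ 2)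
        = ∑ p : Fin m → Fin N, ∑ q : Fin m → Fin N,
            (d p * d q * (∏ i, B (π (p i)) i) * (∏ i, B (π (q i)) i))
              * ∑ ε : Fin N → ℤˣ,
                  (∏ i, ((ε (p i) : ℤ) : ℝ)) * ∏ i, ((ε (q i) : ℤ) : ℝ) := by
      simp_rw [pow_two, detexp, Finset.sum_mul_sum, Finset.mul_sum]
      rw [Finset.sum_comm]
      refine Finset.sum_congr rfl (fun p _ => ?_)
      rw [Finset.sum_comm]
      refine Finset.sum_congr rfl (fun q _ => ?_)
      ring_nf
      refine Finset.sum_congr rfl (fun ε _ => ?_)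
      ring
    rw [step1, Finset.mul_sum]
    refine Finset.sum_congr rfl (fun p _ => ?_)
    by_cases hp : Function.Injective p
    · -- inner q-sum equals `2^N * d p ^ 2 * H (π ∘ p)`
      have hq1 : ∀ q : Fin m → Fin N,
          (d p * d q * (∏ i, B (π (p i)) i) * (∏ i, B (π (q i)) i))
              * (∑ ε : Fin N → ℤˣ,
                  (∏ i, ((ε (p i) : ℤ) : ℝ)) * ∏ i, ((ε (q i) : ℤ) : ℝ))
            = if Finset.univ.image q = Finset.univ.image p
                then (d p * d q * (∏ i, B (π (p i)) i) * (∏ i, B (π (q i)) i)) * (2 : ℝ) ^ N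
                else 0 := by
        intro q
        by_cases hq : Function.Injective q
        · rw [eps_pair hp hq, mul_ite, mul_zero]
          congr 1
          simp [eq_comm]
        · have : d q = 0 := dcol_zero A hq
          simp [this]
      rw [Finset.sum_congr rfl (fun q _ => hq1 q)]
      rw [sum_q_eq _ (by
        intro q hq
        have : d q = 0 := dcol_zero A hq
        simp [this]) hp]
      -- now the τ-sum
      have hterm : ∀ τ : Equiv.Perm (Fin m),
          (d p * d (p ∘ τ) * (∏ i, B (π (p i)) i) * (∏ i, B (π ((p ∘ τ) i)) i)) * (2 : ℝ) ^ N
            = ((2:ℝ) ^ N * d p ^ 2 * ∏ i, B (π (p i)) i)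
                * (((Equiv.Perm.sign τ : ℤ) : ℝ) * ∏ i, B (π (p (τ i))) i) := by
        intro τ
        rw [hd, dcol_comp]
        have : ∏ i, B (π ((p ∘ τ) i)) i = ∏ i, B (π (p (τ i))) i := rfl
        rw [this]
        ring
      rw [Finset.sum_congr rfl (fun τ _ => hterm τ), ← Finset.mul_sum]
      have hdet : ∑ τ : Equiv.Perm (Fin m),
          ((Equiv.Perm.sign τ : ℤ) : ℝ) * ∏ i, B (π (p (τ i))) i
            = (B.submatrix (⇑π ∘ p) id).det := by
        rw [Matrix.det_apply']
        rfl
      rw [hdet]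
      have hHapp : H (⇑π ∘ p)
          = (∏ i, B (π (p i)) i) * (B.submatrix (⇑π ∘ p) id).det := rfl
      rw [hHapp]
      ring
    · -- `d p = 0`
      have hdp : d p = 0 := dcol_zero A hp
      rw [Finset.sum_eq_zero (fun q _ => by rw [hdp]; ring)]
      rw [hdp]
      ring
  -- sum over π
  have key2 : (∑ π : Equiv.Perm (Fin N), ∑ ε : Fin N → ℤˣ,
      (A * signedPermCols π ε B).det ^ 2)
        = (2 : ℝ) ^ N * (((N - m).factorial : ℝ) * (m.factorial : ℝ)) := by
    rw [Finset.sum_congr rfl (fun π _ => key1 π), ← Finset.mul_sum]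
    congr 1
    rw [Finset.sum_comm]
    have h2 : ∀ p : Fin m → Fin N,
        (∑ π : Equiv.Perm (Fin N), d p ^ 2 * H (⇑π ∘ p))
          = d p ^ 2 * ((N - m).factorial : ℝ) := by
      intro p
      rw [← Finset.mul_sum]
      by_cases hp : Function.Injective p
      · rw [sum_pi_comp H hHzero hp, sumB1, mul_one]
      · have : d p = 0 := dcol_zero A hp
        rw [this]
        ring
    rw [Finset.sum_congr rfl (fun p _ => h2 p)]
    rw [← Finset.sum_mul, sumA]
    ring
  rw [key2]
  -- final arithmetic
  have hfac : (N.choose m : ℝ) * ((m.factorial : ℝ) * ((N - m).factorial : ℝ))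
      = (N.factorial : ℝ) := by
    rw [← Nat.cast_mul, ← Nat.cast_mul]
    norm_cast
    rw [← mul_assoc]
    exact Nat.choose_mul_factorial_mul_factorial hmN
  have hc0 : (N.choose m : ℝ) ≠ 0 := Nat.cast_ne_zero.2 (Nat.choose_pos hmN).ne'
  have h20 : (2 : ℝ) ^ N ≠ 0 := by positivity
  have hN0 : (N.factorial : ℝ) ≠ 0 := Nat.cast_ne_zero.2 (Nat.factorial_ne_zero N)
  have hcpos : (0 : ℝ) < (N.choose m : ℝ) := by
    exact_mod_cast Nat.choose_pos hmN
  rw [div_eq_div_iff (by positivity) hcpos.ne']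
  linear_combination (2 : ℝ) ^ N * hfac

end
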